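/- Let W and T be real n×n matrices with W symmetric positive definite and T symmetric positive semidefinite such that T ≠ 0 (equivalently S = W^{-1/2} T W^{-1/2} has at least one positive eigenvalue). Let μ_s denote the smallest positive eigenvalue of S and μ_max the largest eigenvalue of S. If the parameters α and β satisfy 0 < β < α, α > (1/μ_s - μ_s)/2 and β > (μ_max - 1/μ_max)/2, then ρ(G_{α,β}) < 1. -/

import Mathlib

open Matrix
open scoped ENNReal NNReal

open scoped ComplexOrder

/-- The positive semidefinite square root of a positive semidefinite matrix (the definition
`Matrix.PosSemidef.sqrt` of the older Mathlib, since removed). -/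
noncomputable def Matrix.PosSemidef.sqrt {n 𝕜 : Type*} [Fintype n] [RCLike 𝕜] [DecidableEq n]
    {A : Matrix n n 𝕜} (hA : A.PosSemidef) : Matrix n n 𝕜 :=
  hA.1.eigenvectorUnitary.1 * diagonal ((↑) ∘ (√·) ∘ hA.1.eigenvalues) *
  (star hA.1.eigenvectorUnitary : Matrix n n 𝕜)

theorem Matrix.PosSemidef.posSemidef_sqrt' {n : ℕ} {A : Matrix (Fin n) (Fin n) ℝ}
    (hA : A.PosSemidef) : hA.sqrt.PosSemidef := by
  unfold Matrix.PosSemidef.sqrt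
  have hD : (diagonal ((↑) ∘ (√·) ∘ hA.1.eigenvalues) : Matrix (Fin n) (Fin n) ℝ).PosSemidef :=
    posSemidef_diagonal_iff.mpr (fun i => by simp [Real.sqrt_nonneg])
  have h := hD.mul_mul_conjTranspose_same (hA.1.eigenvectorUnitary.1)
  rwa [← star_eq_conjTranspose] at h

theorem Matrix.PosSemidef.sqrt_mul_self' {n : ℕ} {A : Matrix (Fin n) (Fin n) ℝ}
    (hA : A.PosSemidef) : hA.sqrt * hA.sqrt = A := by
  unfold Matrix.PosSemidef.sqrt
  have hU : (star hA.1.eigenvectorUnitary : Matrix (Fin n) (Fin n) ℝ) *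
      hA.1.eigenvectorUnitary.1 = 1 := mem_unitaryGroup_iff'.mp hA.1.eigenvectorUnitary.2
  simp only [Matrix.mul_assoc]
  rw [← Matrix.mul_assoc (star _ : Matrix (Fin n) (Fin n) ℝ) _, hU, Matrix.one_mul,
    ← Matrix.mul_assoc (diagonal _) (diagonal _), diagonal_mul_diagonal]
  conv_rhs => rw [hA.1.spectral_theorem, Unitary.conjStarAlgAut_apply]
  rw [Matrix.mul_assoc]
  congr 3
  funext i
  simp [Real.mul_self_sqrt (hA.eigenvalues_nonneg i)]

theorem scalar_bound (α β μ μmax : ℝ) (hβ0 : 0 < β) (hβα : β < α)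
    (hβlow : (μmax - 1 / μmax) / 2 < β)
    (hμ0 : 0 ≤ μ) (hμle : μ ≤ μmax) :
    |(1 + β * μ)⁻¹ * (-β + 1 * μ) * (α + 1 * μ)⁻¹ * (1 + -α * μ)| < 1 := by
  have hα0 : 0 < α := hβ0.trans hβα
  have h1 : 0 < 1 + β * μ := by nlinarith
  have h2 : 0 < α + μ := by nlinarith
  have hden : 0 < (1 + β * μ) * (α + μ) := mul_pos h1 h2
  have habs : |(μ - β) * (1 - α * μ)| < (1 + β * μ) * (α + μ) := by
    rw [abs_lt]
    constructor
    · by_cases hc : μ ≤ 1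
      · have t1 : 0 ≤ (α - β) * (1 - μ^2) :=
          mul_nonneg (by linarith) (by nlinarith)
        by_cases h0 : μ = 0
        · subst h0; nlinarith
        · have hμpos : 0 < μ := lt_of_le_of_ne hμ0 (Ne.symm h0)
          have t2 : 0 < 2*μ*(1+α*β) :=
            mul_pos (by linarith) (by nlinarith)
          nlinarith
      · push_neg at hc
        have hμmax1 : 1 < μmax := lt_of_lt_of_le hc hμle
        have hβ2 : μmax - 1/μmax < 2*β := by linarith
        have hmono : μ - 1/μ ≤ μmax - 1/μmax := by
          have : 1/μmax ≤ 1/μ := one_div_le_one_div_of_le (by linarith) hμle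
          linarith
        have h2βμ : μ^2 - 1 < 2*β*μ := by
          have h3 : μ - 1/μ < 2*β := lt_of_le_of_lt hmono hβ2
          have h4 : (μ - 1/μ)*μ < 2*β*μ := mul_lt_mul_of_pos_right h3 (by linarith)
          have h5 : (μ - 1/μ)*μ = μ^2 - 1 := by field_simp
          linarith
        nlinarith [mul_pos hα0 (show (0:ℝ) < 1 + 2*β*μ - μ^2 by linarith),
          mul_nonneg hβ0.le (show (0:ℝ) ≤ μ^2 - 1 by nlinarith)]
    · nlinarith [sq_nonneg μ, mul_pos (add_pos hα0 hβ0) (by nlinarith : (0:ℝ) < 1 + μ^2)]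
  have he : (1 + β * μ)⁻¹ * (-β + 1 * μ) * (α + 1 * μ)⁻¹ * (1 + -α * μ)
      = ((μ - β) * (1 - α * μ)) / ((1 + β * μ) * (α + μ)) := by
    field_simp
    ring
  rw [he, abs_div, abs_of_pos hden, div_lt_one hden]
  exact habs


/-- **Theorem 3 (further sufficient convergence conditions).** Suppose `W` is symmetric
positive definite, `T` is symmetric positive semidefinite and `T ≠ 0`, let `μs` be the
smallest positive eigenvalue and `μmax` the largest eigenvalue of `S = W^{-1/2} T W^{-1/2}`.
If `0 < β < α`, `α > (1/μs - μs)/2` and `β > (μmax - 1/μmax)/2`, then the spectral radius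
of the TTSCSP iteration matrix is less than one. -/
theorem ttscsp_convergence_thm3
    {n : ℕ} (hn : 0 < n)
    (W T : Matrix (Fin n) (Fin n) ℝ)
    (hW : W.PosDef) (hT : T.PosSemidef) (hT0 : T ≠ 0)
    (S : Matrix (Fin n) (Fin n) ℝ)
    (hSdef : S = (hW.posSemidef.sqrt)⁻¹ * T * (hW.posSemidef.sqrt)⁻¹)
    (hS : S.IsHermitian)
    (μs μmax : ℝ)
    (hμs : IsLeast {μ : ℝ | (∃ i, hS.eigenvalues i = μ) ∧ 0 < μ} μs)
    (hμmax : μmax = ⨆ i, hS.eigenvalues i)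
    (α β : ℝ)
    (hβ0 : 0 < β) (hβα : β < α)
    (hαlow : (1 / μs - μs) / 2 < α)
    (hβlow : (μmax - 1 / μmax) / 2 < β) :
    spectralRadius ℂ
      (((W + β • T)⁻¹ * (T - β • W) * (α • W + T)⁻¹ * (W - α • T)).map Complex.ofReal) < 1 := by
  classical
  -- setup on P = sqrt W
  set P : Matrix (Fin n) (Fin n) ℝ := hW.posSemidef.sqrt with hPdef
  have hPsd : P.PosSemidef := hW.posSemidef.posSemidef_sqrt'
  have hPP : P * P = W := hW.posSemidef.sqrt_mul_self'
  have hPdet : IsUnit P.det := by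
    have hdet : W.det = P.det * P.det := by rw [← hPP, det_mul]
    have hne : P.det ≠ 0 := by
      intro h
      rw [h, mul_zero] at hdet
      exact hW.det_pos.ne' hdet
    exact hne.isUnit
  have c1 : ∀ X : Matrix (Fin n) (Fin n) ℝ, P⁻¹ * (P * X) = X := by
    intro X; rw [← Matrix.mul_assoc, nonsing_inv_mul P hPdet, one_mul]
  have c2 : ∀ X : Matrix (Fin n) (Fin n) ℝ, P * (P⁻¹ * X) = X := by
    intro X; rw [← Matrix.mul_assoc, mul_nonsing_inv P hPdet, one_mul]
  have hT' : P * S * P = T := by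
    rw [hSdef]
    have e : P * (P⁻¹ * T * P⁻¹) * P = P * P⁻¹ * T * (P⁻¹ * P) := by
      simp only [Matrix.mul_assoc]
    rw [e, mul_nonsing_inv P hPdet, nonsing_inv_mul P hPdet, one_mul, mul_one]
  -- S is positive semidefinite
  have hPinvH : P⁻¹ᴴ = P⁻¹ := hPsd.1.inv
  have hSpsd : S.PosSemidef := by
    rw [hSdef]
    have h := hT.mul_mul_conjTranspose_same P⁻¹
    rwa [hPinvH] at h
  set d : Fin n → ℝ := hS.eigenvalues with hddef
  have hd0 : ∀ i, 0 ≤ d i := fun i => hSpsd.eigenvalues_nonneg i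
  have hdle : ∀ i, d i ≤ μmax := by
    intro i
    rw [hμmax]
    exact le_ciSup (Set.Finite.bddAbove (Set.finite_range _)) i
  -- spectral theorem
  set U : Matrix (Fin n) (Fin n) ℝ := (hS.eigenvectorUnitary : Matrix (Fin n) (Fin n) ℝ)
    with hUdef
  have hU1 : star U * U = 1 := mem_unitaryGroup_iff'.mp hS.eigenvectorUnitary.2
  have hU2 : U * star U = 1 := mem_unitaryGroup_iff.mp hS.eigenvectorUnitary.2
  have c3 : ∀ X : Matrix (Fin n) (Fin n) ℝ, star U * (U * X) = X := by
    intro X; rw [← Matrix.mul_assoc, hU1, one_mul]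
  have c4 : ∀ X : Matrix (Fin n) (Fin n) ℝ, U * (star U * X) = X := by
    intro X; rw [← Matrix.mul_assoc, hU2, one_mul]
  have hUinv : U⁻¹ = star U := inv_eq_left_inv hU1
  have hsUinv : (star U)⁻¹ = U := inv_eq_left_inv hU2
  have hSspec : S = U * diagonal d * star U := by
    have h := hS.spectral_theorem
    rwa [RCLike.ofReal_real_eq_id, Function.id_comp] at h
  -- the key factorization lemma
  have key : ∀ a b : ℝ,
      a • W + b • T = P * U * diagonal (fun i => a + b * d i) * (star U * P) := by
    intro a b
    have hdiag : diagonal (fun i => a + b * d i)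
        = a • (1 : Matrix (Fin n) (Fin n) ℝ) + b • diagonal d := by
      ext i j
      by_cases hij : i = j <;>
        simp [Matrix.diagonal_apply, Matrix.one_apply, hij]
    rw [hdiag, mul_add, add_mul, Matrix.mul_smul, Matrix.smul_mul, Matrix.mul_smul,
      Matrix.smul_mul, mul_one]
    have e1 : P * U * (star U * P) = W := by
      rw [Matrix.mul_assoc, c4, hPP]
    have e2 : P * U * diagonal d * (star U * P) = T := by
      rw [← hT', hSspec]
      simp only [Matrix.mul_assoc]
    rw [e1, e2]
  have hF1 : W + β • T = P * U * diagonal (fun i => 1 + β * d i) * (star U * P) := by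
    rw [← key 1 β, one_smul]
  have hF2 : T - β • W = P * U * diagonal (fun i => -β + 1 * d i) * (star U * P) := by
    rw [← key (-β) 1, one_smul, neg_smul, neg_add_eq_sub]
  have hF3 : α • W + T = P * U * diagonal (fun i => α + 1 * d i) * (star U * P) := by
    rw [← key α 1, one_smul]
  have hF4 : W - α • T = P * U * diagonal (fun i => 1 + -α * d i) * (star U * P) := by
    rw [← key 1 (-α), one_smul, neg_smul, ← sub_eq_add_neg]
  set g : Fin n → ℝ := fun i =>
    (1 + β * d i)⁻¹ * (-β + 1 * d i) * (α + 1 * d i)⁻¹ * (1 + -α * d i) with hgdef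
  have hdinv : ∀ v : Fin n → ℝ, (∀ i, v i ≠ 0) →
      (diagonal v)⁻¹ = diagonal (fun i => (v i)⁻¹) := by
    intro v hv
    apply inv_eq_right_inv
    rw [diagonal_mul_diagonal, ← Matrix.diagonal_one]
    refine congrArg diagonal (funext fun i => ?_)
    exact mul_inv_cancel₀ (hv i)
  have hα0 : 0 < α := hβ0.trans hβα
  have hv1 : ∀ i, (1 : ℝ) + β * d i ≠ 0 := fun i => by nlinarith [hd0 i]
  have hv3 : ∀ i, α + 1 * d i ≠ 0 := fun i => by nlinarith [hd0 i]
  have hg' : (diagonal (fun i => 1 + β * d i))⁻¹ * diagonal (fun i => -β + 1 * d i) *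
      (diagonal (fun i => α + 1 * d i))⁻¹ * diagonal (fun i => 1 + -α * d i)
      = diagonal g := by
    rw [hdinv _ hv1, hdinv _ hv3, diagonal_mul_diagonal,
      diagonal_mul_diagonal, diagonal_mul_diagonal]
  have hMfact : (W + β • T)⁻¹ * (T - β • W) * (α • W + T)⁻¹ * (W - α • T)
      = (P⁻¹ * U) * diagonal g * (star U * P) := by
    rw [hF1, hF2, hF3, hF4]
    simp only [Matrix.mul_inv_rev, hsUinv, hUinv]
    simp only [Matrix.mul_assoc, c1, c2, c3, c4]
    simp only [← Matrix.mul_assoc]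
    rw [← hg']
    simp only [Matrix.mul_assoc]
  rw [hMfact]
  -- move to ℂ
  have hofr : Complex.ofReal = ⇑Complex.ofRealHom := rfl
  have hmap : ∀ A B : Matrix (Fin n) (Fin n) ℝ,
      (A * B).map Complex.ofReal = A.map Complex.ofReal * B.map Complex.ofReal := by
    intro A B
    rw [hofr]
    exact Matrix.map_mul
  have hmap1 : (1 : Matrix (Fin n) (Fin n) ℝ).map Complex.ofReal = 1 :=
    Matrix.map_one _ Complex.ofReal_zero Complex.ofReal_one
  have hQQi : (P⁻¹ * U) * (star U * P) = 1 := by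
    rw [Matrix.mul_assoc, c4, nonsing_inv_mul P hPdet]
  have hQiQ : (star U * P) * (P⁻¹ * U) = 1 := by
    rw [Matrix.mul_assoc, c2, hU1]
  set Qc := (P⁻¹ * U).map Complex.ofReal with hQc
  set Qic := (star U * P).map Complex.ofReal with hQic
  have hu1 : Qc * Qic = 1 := by rw [hQc, hQic, ← hmap, hQQi, hmap1]
  have hu2 : Qic * Qc = 1 := by rw [hQc, hQic, ← hmap, hQiQ, hmap1]
  set u : (Matrix (Fin n) (Fin n) ℂ)ˣ := ⟨Qc, Qic, hu1, hu2⟩ with hudef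
  have hrw : ((P⁻¹ * U) * diagonal g * (star U * P)).map Complex.ofReal
      = (↑u : Matrix (Fin n) (Fin n) ℂ) * (diagonal fun i => (g i : ℂ))
        * (↑u⁻¹ : Matrix (Fin n) (Fin n) ℂ) := by
    rw [hmap, hmap]
    have : (diagonal g).map Complex.ofReal = diagonal fun i => (g i : ℂ) :=
      Matrix.diagonal_map Complex.ofReal_zero
    rw [this]
    rfl
  rw [hrw]
  have hspec : spectrum ℂ ((↑u : Matrix (Fin n) (Fin n) ℂ)
      * (diagonal fun i => (g i : ℂ)) * (↑u⁻¹ : Matrix (Fin n) (Fin n) ℂ))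
      = Set.range (fun i => (g i : ℂ)) := by
    rw [spectrum.units_conjugate, spectrum_diagonal]
  -- finish with the eigenvalue bound
  have hlt : ∀ i, ‖(g i : ℂ)‖₊ < 1 := by
    intro i
    have h := scalar_bound α β (d i) μmax hβ0 hβα hβlow (hd0 i) (hdle i)
    have hnorm : ‖(g i : ℂ)‖ < 1 := by
      rw [Complex.norm_real, Real.norm_eq_abs]
      exact h
    rw [← coe_nnnorm, ← NNReal.coe_one, NNReal.coe_lt_coe] at hnorm
    exact hnorm
  have hsr : spectralRadius ℂ ((↑u : Matrix (Fin n) (Fin n) ℂ)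
      * (diagonal fun i => (g i : ℂ)) * (↑u⁻¹ : Matrix (Fin n) (Fin n) ℂ))
      = ⨆ i, (‖(g i : ℂ)‖₊ : ℝ≥0∞) := by
    unfold spectralRadius
    rw [hspec, iSup_range]
  rw [hsr]
  have hsup : (Finset.univ.sup fun i => ‖(g i : ℂ)‖₊) < 1 :=
    Finset.sup_lt_iff (by norm_num : (⊥ : NNReal) < 1) |>.2 fun i _ => hlt i
  calc (⨆ i, (‖(g i : ℂ)‖₊ : ℝ≥0∞))
      ≤ ((Finset.univ.sup fun i => ‖(g i : ℂ)‖₊ : NNReal) : ℝ≥0∞) :=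
        iSup_le fun i => ENNReal.coe_le_coe.2
          (Finset.le_sup (f := fun i => ‖(g i : ℂ)‖₊) (Finset.mem_univ i))
    _ < 1 := by exact_mod_cast hsup
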